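/- Let c, k, t be positive integers with c ≥ 2 and k ≥ t+2. Fix a family T of t pairwise disjoint c-subsets of [ck] and a family M of k-1 pairwise disjoint c-subsets with T ⊆ M. For j ∈ {t,...,k-1} let A_j = {c-uniform partitions F of [ck] : T ⊆ F and |M ∩ F| = j}. Then binom(k-t-1, j-t)·(1/(k-j)!)·∏_{i=j}^{k-1} binom((k-i)c,c) = Σ_{i=j}^{k-1} binom(i-t, j-t)·|A_i|. -/

import Mathlib

open Finset

/-- `UParts c k ℓ S`: `S` is a family of `ℓ` pairwise disjoint `c`-subsets of `[ck]`. -/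
def UParts (c k ℓ : ℕ) (S : Finset (Finset (Fin (c * k)))) : Prop :=
  S.card = ℓ ∧ (∀ e ∈ S, e.card = c) ∧
    ∀ e ∈ S, ∀ f ∈ S, e ≠ f → Disjoint e f

/-- `UPartition c k F`: `F` is a `c`-uniform partition of `[ck]` into `k` blocks. -/
def UPartition (c k : ℕ) (F : Finset (Finset (Fin (c * k)))) : Prop :=
  UParts c k k F ∧ ∀ x : Fin (c * k), ∃ e ∈ F, x ∈ e

/-- Cross `t`-intersecting families: any two members from different families share `≥ t` blocks. -/
def CrossInt (c k t : ℕ) (F G : Finset (Finset (Finset (Fin (c * k))))) : Prop :=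
  ∀ A ∈ F, ∀ B ∈ G, t ≤ (A ∩ B).card

/-- `S` is a `t`-cover of the family `F`: a family of pairwise disjoint `c`-subsets meeting
every member of `F` in at least `t` blocks. -/
def IsTCover (c k t : ℕ) (F : Finset (Finset (Finset (Fin (c * k)))))
    (S : Finset (Finset (Fin (c * k)))) : Prop :=
  UParts c k S.card S ∧ ∀ A ∈ F, t ≤ (S ∩ A).card

/-- The `t`-covering number: minimum size of a `t`-cover. -/
noncomputable def tau (c k t : ℕ) (F : Finset (Finset (Finset (Fin (c * k))))) : ℕ :=
  sInf {s | ∃ S, IsTCover c k t F S ∧ S.card = s}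

/-- `θ(c,k,z) = (1/(k-z)!) · ∏_{i=z}^{k-1} C((k-i)c, c)`. -/
def theta (c k z : ℕ) : ℚ :=
  (1 / ((k - z).factorial : ℚ)) * ∏ i ∈ Finset.Ico z k, ((((k - i) * c).choose c : ℕ) : ℚ)

/-- `g(c,k,t,z) = θ(c,k,z)·C(z,t)·∏_{j=1}^{z-t}(k-(t+j-1))`. -/
def gfun (c k t z : ℕ) : ℚ :=
  theta c k z * ((z.choose t : ℕ) : ℚ) * ∏ j ∈ Finset.Icc 1 (z - t), ((k - (t + j - 1) : ℕ) : ℚ)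

/-- `f₀(c,k,t) = (k-t-1)·θ(c,k,t+1) − C(k-t-1,2)·θ(c,k,t+2)`. -/
def f0 (c k t : ℕ) : ℚ :=
  ((k - t - 1 : ℕ) : ℚ) * theta c k (t + 1) - (((k - t - 1).choose 2 : ℕ) : ℚ) * theta c k (t + 2)

/-- `f₂(c,k,t) = (t+2)·θ(c,k,t+1) − (t+1)(k-t-1)·θ(c,k,t+2)`. -/
def f2q (c k t : ℕ) : ℚ :=
  ((t : ℚ) + 2) * theta c k (t + 1) - ((t : ℚ) + 1) * ((k - t - 1 : ℕ) : ℚ) * theta c k (t + 2)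

open Classical in
noncomputable def PartsOf (c : ℕ) {n : ℕ} (R : Finset (Fin n)) : Finset (Finset (Finset (Fin n))) :=
  Finset.univ.filter (fun G => (∀ e ∈ G, e.card = c) ∧
    (∀ e ∈ G, ∀ f ∈ G, e ≠ f → Disjoint e f) ∧ G.sup id = R)

lemma mem_PartsOf {c n : ℕ} {R : Finset (Fin n)} {G : Finset (Finset (Fin n))} :
    G ∈ PartsOf c R ↔ (∀ e ∈ G, e.card = c) ∧
      (∀ e ∈ G, ∀ f ∈ G, e ≠ f → Disjoint e f) ∧ G.sup id = R := by
  simp [PartsOf]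

lemma subset_of_mem_PartsOf {c n : ℕ} {R : Finset (Fin n)} {G : Finset (Finset (Fin n))}
    (hG : G ∈ PartsOf c R) {e : Finset (Fin n)} (he : e ∈ G) : e ⊆ R := by
  rw [mem_PartsOf] at hG
  rw [← hG.2.2]
  exact Finset.le_sup (f := id) he

lemma card_biUnion_id {n : ℕ} {c : ℕ} {G : Finset (Finset (Fin n))}
    (hd : ∀ e ∈ G, ∀ f ∈ G, e ≠ f → Disjoint e f) (hc : ∀ e ∈ G, e.card = c) :
    (G.sup id).card = G.card * c := by
  rw [Finset.sup_eq_biUnion]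
  have h1 : (G.biUnion id).card = ∑ e ∈ G, (id e).card := Finset.card_biUnion hd
  rw [h1]
  simp only [id_eq]
  rw [Finset.sum_congr rfl (fun e he => hc e he), Finset.sum_const, smul_eq_mul]

lemma card_of_mem_PartsOf {c n : ℕ} {R : Finset (Fin n)} {G : Finset (Finset (Fin n))}
    (hG : G ∈ PartsOf c R) : R.card = G.card * c := by
  rw [mem_PartsOf] at hG
  rw [← hG.2.2]
  exact card_biUnion_id hG.2.1 hG.1

lemma partsOf_empty {c n : ℕ} (hc : 1 ≤ c) : PartsOf c (∅ : Finset (Fin n)) = {∅} := by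
  ext G
  rw [mem_PartsOf, Finset.mem_singleton]
  constructor
  · rintro ⟨h1, _, h3⟩
    by_contra hne
    obtain ⟨e, he⟩ := Finset.nonempty_iff_ne_empty.2 hne
    have : e ⊆ (∅ : Finset (Fin n)) := by
      rw [← h3]; exact Finset.le_sup (f := id) he
    have := Finset.subset_empty.1 this
    have hec := h1 e he
    rw [this] at hec
    simp at hec
    omega
  · rintro rfl
    refine ⟨by simp, by simp, by simp⟩

lemma partsOf_card (c : ℕ) (hc : 1 ≤ c) {n : ℕ} :
    ∀ (m : ℕ) (R : Finset (Fin n)), R.card = m * c →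
      m.factorial * (PartsOf c R).card = ∏ i ∈ Finset.range m, (((m - i) * c).choose c) := by
  intro m
  induction m with
  | zero =>
    intro R hR
    simp only [Nat.zero_mul, Finset.card_eq_zero] at hR
    subst hR
    rw [partsOf_empty hc]
    simp
  | succ m ih =>
    intro R hR
    have hRne : R.Nonempty := by
      rw [← Finset.card_pos, hR]; positivity
    obtain ⟨x, hx⟩ := hRne
    set Bx : Finset (Finset (Fin n)) := (R.powersetCard c).filter (fun B => x ∈ B) with hBx
    -- card of Bx
    have hBxcard : Bx.card = (R.card - 1).choose (c - 1) := by
      rw [← Finset.card_erase_of_mem hx, ← Finset.card_powersetCard]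
      refine Finset.card_bij' (fun B _ => B.erase x) (fun S _ => insert x S) ?_ ?_ ?_ ?_
      · intro B hB
        simp only [hBx, Finset.mem_filter, Finset.mem_powersetCard] at hB
        rw [Finset.mem_powersetCard]
        exact ⟨Finset.erase_subset_erase x hB.1.1, by
          rw [Finset.card_erase_of_mem hB.2, hB.1.2]⟩
      · intro S hS
        rw [Finset.mem_powersetCard] at hS
        simp only [hBx, Finset.mem_filter, Finset.mem_powersetCard]
        have hxS : x ∉ S := fun hxs => (Finset.mem_erase.1 (hS.1 hxs)).1 rfl
        refine ⟨⟨?_, ?_⟩, Finset.mem_insert_self x S⟩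
        · intro y hy
          rcases Finset.mem_insert.1 hy with rfl | hy
          · exact hx
          · exact (Finset.erase_subset x R) (hS.1 hy)
        · rw [Finset.card_insert_of_notMem hxS, hS.2]; omega
      · intro B hB
        simp only [hBx, Finset.mem_filter] at hB
        exact Finset.insert_erase hB.2
      · intro S hS
        rw [Finset.mem_powersetCard] at hS
        have hxS : x ∉ S := fun hxs => (Finset.mem_erase.1 (hS.1 hxs)).1 rfl
        exact Finset.erase_insert hxS
    -- decomposition
    have hdecomp : PartsOf c R = Bx.biUnion (fun B => (PartsOf c (R \ B)).image (insert B)) := by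
      ext G
      constructor
      · intro hG
        have hG' := hG
        rw [mem_PartsOf] at hG'
        obtain ⟨h1, h2, h3⟩ := hG'
        have hxsup : x ∈ G.sup id := h3 ▸ hx
        rw [Finset.mem_sup] at hxsup
        obtain ⟨B, hBG, hxB⟩ := hxsup
        rw [Finset.mem_biUnion]
        refine ⟨B, ?_, ?_⟩
        · simp only [hBx, Finset.mem_filter, Finset.mem_powersetCard]
          exact ⟨⟨subset_of_mem_PartsOf hG hBG, h1 B hBG⟩, hxB⟩
        · rw [Finset.mem_image]
          refine ⟨G.erase B, ?_, Finset.insert_erase hBG⟩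
          rw [mem_PartsOf]
          refine ⟨fun e he => h1 e (Finset.erase_subset B G he),
            fun e he f hf hef => h2 e (Finset.erase_subset B G he) f (Finset.erase_subset B G hf) hef, ?_⟩
          apply Finset.Subset.antisymm
          · intro y hy
            rw [Finset.mem_sup] at hy
            obtain ⟨e, he, hye⟩ := hy
            have heB := (Finset.mem_erase.1 he).1
            have heG := (Finset.mem_erase.1 he).2
            rw [Finset.mem_sdiff]
            refine ⟨subset_of_mem_PartsOf hG heG hye, fun hyB => ?_⟩
            exact (Finset.disjoint_left.1 (h2 e heG B hBG heB)) hye hyB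
          · intro y hy
            rw [Finset.mem_sdiff] at hy
            have : y ∈ G.sup id := h3 ▸ hy.1
            rw [Finset.mem_sup] at this
            obtain ⟨e, heG, hye⟩ := this
            rw [Finset.mem_sup]
            refine ⟨e, Finset.mem_erase.2 ⟨fun h => hy.2 (h ▸ hye), heG⟩, hye⟩
      · intro hG
        rw [Finset.mem_biUnion] at hG
        obtain ⟨B, hB, hG⟩ := hG
        rw [Finset.mem_image] at hG
        obtain ⟨G', hG', rfl⟩ := hG
        simp only [hBx, Finset.mem_filter, Finset.mem_powersetCard] at hB
        obtain ⟨⟨hBR, hBc⟩, hxB⟩ := hB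
        have hGmem := hG'
        rw [mem_PartsOf] at hG' ⊢
        obtain ⟨h1, h2, h3⟩ := hG'
        have hBG' : B ∉ G' := by
          intro hBin
          have : B ⊆ R \ B := by rw [← h3]; exact Finset.le_sup (f := id) hBin
          exact (Finset.mem_sdiff.1 (this hxB)).2 hxB
        refine ⟨?_, ?_, ?_⟩
        · intro e he
          rcases Finset.mem_insert.1 he with rfl | he
          · exact hBc
          · exact h1 e he
        · have key : ∀ g ∈ G', Disjoint B g := fun g hg => Finset.disjoint_right.2
            (fun a ha => (Finset.mem_sdiff.1 ((subset_of_mem_PartsOf hGmem hg) ha)).2)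
          intro e he f hf hef
          rcases Finset.mem_insert.1 he with he1 | he1 <;>
            rcases Finset.mem_insert.1 hf with hf1 | hf1
          · exact absurd (he1.trans hf1.symm) hef
          · subst he1; exact key f hf1
          · subst hf1; exact (key e he1).symm
          · exact h2 e he1 f hf1 hef
        · rw [Finset.sup_insert, h3]
          simp only [id_eq]
          exact Finset.union_sdiff_of_subset hBR
    -- disjointness of the biUnion
    have hdisj : ∀ B1 ∈ Bx, ∀ B2 ∈ Bx, B1 ≠ B2 →
        Disjoint ((PartsOf c (R \ B1)).image (insert B1)) ((PartsOf c (R \ B2)).image (insert B2)) := by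
      intro B1 hB1 B2 hB2 hne
      rw [Finset.disjoint_left]
      intro G hG1 hG2
      rw [Finset.mem_image] at hG1 hG2
      obtain ⟨G1, hG1', rfl⟩ := hG1
      obtain ⟨G2, hG2', heq⟩ := hG2
      simp only [hBx, Finset.mem_filter, Finset.mem_powersetCard] at hB1 hB2
      -- B2 ∈ insert B1 G1, contains x; members of G1 don't contain x
      have hB2mem : B2 ∈ insert B1 G1 := heq ▸ Finset.mem_insert_self B2 G2
      rcases Finset.mem_insert.1 hB2mem with h | h
      · exact hne h.symm
      · have : B2 ⊆ R \ B1 := subset_of_mem_PartsOf hG1' h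
        have hx2 : x ∈ B2 := hB2.2
        have hx1 : x ∈ B1 := hB1.2
        exact (Finset.mem_sdiff.1 (this hx2)).2 hx1
    have hinj : ∀ B ∈ Bx, ∀ G1 ∈ PartsOf c (R \ B), ∀ G2 ∈ PartsOf c (R \ B),
        insert B G1 = insert B G2 → G1 = G2 := by
      intro B hB G1 hG1 G2 hG2 heq
      simp only [hBx, Finset.mem_filter, Finset.mem_powersetCard] at hB
      have hb1 : B ∉ G1 := by
        intro hBin
        have : B ⊆ R \ B := subset_of_mem_PartsOf hG1 hBin
        exact (Finset.mem_sdiff.1 (this hB.2)).2 hB.2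
      have hb2 : B ∉ G2 := by
        intro hBin
        have : B ⊆ R \ B := subset_of_mem_PartsOf hG2 hBin
        exact (Finset.mem_sdiff.1 (this hB.2)).2 hB.2
      rw [← Finset.erase_insert hb1, ← Finset.erase_insert hb2, heq]
    have hcard : (PartsOf c R).card = ∑ B ∈ Bx, (PartsOf c (R \ B)).card := by
      rw [hdecomp, Finset.card_biUnion hdisj]
      exact Finset.sum_congr rfl (fun B hB =>
        Finset.card_image_of_injOn (fun G1 h1 G2 h2 => hinj B hB G1 h1 G2 h2))
    -- apply IH
    have hsub : ∀ B ∈ Bx, (R \ B).card = m * c := by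
      intro B hB
      simp only [hBx, Finset.mem_filter, Finset.mem_powersetCard] at hB
      rw [Finset.card_sdiff_of_subset hB.1.1, hR, hB.1.2]
      have : (m + 1) * c = m * c + c := by ring
      omega
    have hstep : ∀ B ∈ Bx, m.factorial * (PartsOf c (R \ B)).card
        = ∏ i ∈ Finset.range m, (((m - i) * c).choose c) := fun B hB => ih _ (hsub B hB)
    -- assemble
    have hprod : ∏ i ∈ Finset.range (m + 1), (((m + 1 - i) * c).choose c)
        = (((m + 1) * c).choose c) * ∏ i ∈ Finset.range m, (((m - i) * c).choose c) := by
      rw [Finset.prod_range_succ', Nat.sub_zero, mul_comm]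
      congr 1
      apply Finset.prod_congr rfl
      intro i _
      have h' : m + 1 - (i + 1) = m - i := by omega
      rw [h']
    have hchoose : ((m + 1) * c).choose c = (m + 1) * ((m + 1) * c - 1).choose (c - 1) := by
      have h := Nat.add_one_mul_choose_eq ((m + 1) * c - 1) (c - 1)
      have h1 : (m + 1) * c - 1 + 1 = (m + 1) * c := by
        have : 0 < (m + 1) * c := by positivity
        omega
      have h2 : c - 1 + 1 = c := by omega
      rw [h1, h2] at h
      -- h : (m+1)*c * choose ((m+1)*c - 1) (c-1) = choose ((m+1)*c) c * c
      apply Nat.eq_of_mul_eq_mul_right (show 0 < c by omega)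
      calc ((m + 1) * c).choose c * c = (m + 1) * c * (((m + 1) * c - 1).choose (c - 1)) := h.symm
        _ = (m + 1) * (((m + 1) * c - 1).choose (c - 1)) * c := by ring
    calc (m + 1).factorial * (PartsOf c R).card
        = (m + 1) * ∑ B ∈ Bx, m.factorial * (PartsOf c (R \ B)).card := by
          rw [hcard, Finset.mul_sum, Finset.mul_sum, Nat.factorial_succ]
          exact Finset.sum_congr rfl (fun B _ => by ring)
      _ = (m + 1) * ∑ B ∈ Bx, ∏ i ∈ Finset.range m, (((m - i) * c).choose c) := by
          rw [Finset.sum_congr rfl hstep]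
      _ = (m + 1) * (Bx.card * ∏ i ∈ Finset.range m, (((m - i) * c).choose c)) := by
          rw [Finset.sum_const, smul_eq_mul]
      _ = ((m + 1) * ((m + 1) * c - 1).choose (c - 1)) * ∏ i ∈ Finset.range m, (((m - i) * c).choose c) := by
          rw [hBxcard, hR]; ring
      _ = ∏ i ∈ Finset.range (m + 1), (((m + 1 - i) * c).choose c) := by
          rw [hprod, hchoose]

open Classical in
lemma ext_card (c k : ℕ) (hc : 1 ≤ c) (I : Finset (Finset (Fin (c * k)))) (j : ℕ)
    (hI : UParts c k j I) (hjk : j ≤ k) :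
    (Finset.univ.filter (fun F => UPartition c k F ∧ I ⊆ F)).card
      = (PartsOf c (Finset.univ \ I.sup id)).card := by
  obtain ⟨hIcard, hIblocks, hIdisj⟩ := hI
  have hsupIcard : (I.sup id).card = j * c := by
    rw [card_biUnion_id hIdisj hIblocks, hIcard]
  have hRcard : (Finset.univ \ I.sup id : Finset (Fin (c * k))).card = (k - j) * c := by
    rw [Finset.card_sdiff_of_subset (Finset.subset_univ _), hsupIcard, Finset.card_univ,
      Fintype.card_fin, Nat.sub_mul, mul_comm c k]
  refine Finset.card_bij' (fun F _ => F \ I) (fun G _ => G ∪ I) ?_ ?_ ?_ ?_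
  · -- maps to PartsOf
    intro F hF
    rw [Finset.mem_filter] at hF
    obtain ⟨-, ⟨⟨hFk, hFblocks, hFdisj⟩, hFcover⟩, hIF⟩ := hF
    rw [mem_PartsOf]
    refine ⟨fun e he => hFblocks e (Finset.sdiff_subset he),
      fun e he f hf hef => hFdisj e (Finset.sdiff_subset he) f (Finset.sdiff_subset hf) hef, ?_⟩
    ext y
    simp only [Finset.mem_sdiff, Finset.mem_univ, true_and, Finset.mem_sup, id_eq]
    constructor
    · rintro ⟨e, he, hye⟩
      obtain ⟨heF, heI⟩ := he
      rintro ⟨f, hfI, hyf⟩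
      exact Finset.disjoint_left.1 (hFdisj e heF f (hIF hfI) (fun h => heI (h ▸ hfI))) hye hyf
    · intro hy
      obtain ⟨e, heF, hye⟩ := hFcover y
      exact ⟨e, ⟨heF, fun heI => hy ⟨e, heI, hye⟩⟩, hye⟩
  · -- maps back
    intro G hG
    have hGmem := hG
    rw [mem_PartsOf] at hG
    obtain ⟨hGb, hGd, hGsup⟩ := hG
    have hGIdisj : ∀ e ∈ G, ∀ f ∈ I, Disjoint e f := by
      intro e he f hf
      rw [Finset.disjoint_left]
      intro a hae haf
      have h1 := subset_of_mem_PartsOf hGmem he hae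
      exact (Finset.mem_sdiff.1 h1).2 (Finset.mem_sup.2 ⟨f, hf, haf⟩)
    have hGI : Disjoint G I := by
      rw [Finset.disjoint_left]
      intro e heG heI
      have h1 : e ⊆ Finset.univ \ I.sup id := subset_of_mem_PartsOf hGmem heG
      have hene : e.Nonempty := by
        rw [← Finset.card_pos, hGb e heG]; omega
      obtain ⟨a, ha⟩ := hene
      exact (Finset.mem_sdiff.1 (h1 ha)).2 (Finset.mem_sup.2 ⟨e, heI, ha⟩)
    have hGcard : G.card = k - j := by
      have h1 : G.card * c = (k - j) * c := by
        rw [← card_biUnion_id hGd hGb, hGsup, hRcard]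
      exact Nat.eq_of_mul_eq_mul_right (by omega) h1
    rw [Finset.mem_filter]
    refine ⟨Finset.mem_univ _, ⟨⟨?_, ?_, ?_⟩, ?_⟩, Finset.subset_union_right⟩
    · rw [Finset.card_union_of_disjoint hGI, hGcard, hIcard]; omega
    · intro e he
      rcases Finset.mem_union.1 he with h | h
      · exact hGb e h
      · exact hIblocks e h
    · intro e he f hf hef
      rcases Finset.mem_union.1 he with h1 | h1 <;> rcases Finset.mem_union.1 hf with h2 | h2
      · exact hGd e h1 f h2 hef
      · exact hGIdisj e h1 f h2
      · exact (hGIdisj f h2 e h1).symm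
      · exact hIdisj e h1 f h2 hef
    · intro x
      by_cases hx : x ∈ I.sup id
      · obtain ⟨f, hf, hxf⟩ := Finset.mem_sup.1 hx
        exact ⟨f, Finset.mem_union_right _ hf, hxf⟩
      · have : x ∈ G.sup id := by
          rw [hGsup]; exact Finset.mem_sdiff.2 ⟨Finset.mem_univ _, hx⟩
        obtain ⟨e, he, hxe⟩ := Finset.mem_sup.1 this
        exact ⟨e, Finset.mem_union_left _ he, hxe⟩
  · -- left inverse
    intro F hF
    rw [Finset.mem_filter] at hF
    exact Finset.sdiff_union_of_subset hF.2.2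
  · -- right inverse
    intro G hG
    have hGmem := hG
    rw [mem_PartsOf] at hG
    obtain ⟨hGb, -, -⟩ := hG
    have hGI : Disjoint G I := by
      rw [Finset.disjoint_left]
      intro e heG heI
      have h1 : e ⊆ Finset.univ \ I.sup id := subset_of_mem_PartsOf hGmem heG
      have hene : e.Nonempty := by
        rw [← Finset.card_pos, hGb e heG]; omega
      obtain ⟨a, ha⟩ := hene
      exact (Finset.mem_sdiff.1 (h1 ha)).2 (Finset.mem_sup.2 ⟨e, heI, ha⟩)
    exact Finset.union_sdiff_cancel_right hGI

lemma count_between {α : Type*} [DecidableEq α] (T B : Finset α) (t j : ℕ)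
    (hTB : T ⊆ B) (hTt : T.card = t) (htj : t ≤ j) :
    (B.powerset.filter (fun I => T ⊆ I ∧ I.card = j)).card = (B.card - t).choose (j - t) := by
  have h1 : (B.card - t) = (B \ T).card := by rw [Finset.card_sdiff_of_subset hTB, hTt]
  rw [h1, ← Finset.card_powersetCard]
  refine Finset.card_bij' (fun I _ => I \ T) (fun J _ => J ∪ T) ?_ ?_ ?_ ?_
  · intro I hI
    rw [Finset.mem_filter, Finset.mem_powerset] at hI
    obtain ⟨hIB, hTI, hIj⟩ := hI
    rw [Finset.mem_powersetCard]
    exact ⟨Finset.sdiff_subset_sdiff hIB (le_refl T), by rw [Finset.card_sdiff_of_subset hTI, hIj, hTt]⟩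
  · intro J hJ
    rw [Finset.mem_powersetCard] at hJ
    obtain ⟨hJB, hJcard⟩ := hJ
    have hdisj : Disjoint J T := Finset.disjoint_of_subset_left hJB Finset.sdiff_disjoint
    rw [Finset.mem_filter, Finset.mem_powerset]
    refine ⟨Finset.union_subset (hJB.trans Finset.sdiff_subset) hTB,
      Finset.subset_union_right, ?_⟩
    rw [Finset.card_union_of_disjoint hdisj, hJcard, hTt]
    omega
  · intro I hI
    rw [Finset.mem_filter] at hI
    exact Finset.sdiff_union_of_subset hI.2.1
  · intro J hJ
    rw [Finset.mem_powersetCard] at hJ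
    have hdisj : Disjoint J T := Finset.disjoint_of_subset_left hJ.1 Finset.sdiff_disjoint
    exact Finset.union_sdiff_cancel_right hdisj

theorem stmt16 (c k t : ℕ) (hc : 2 ≤ c) (ht : 1 ≤ t) (hk : t + 2 ≤ k)
    (T M : Finset (Finset (Fin (c * k)))) (hT : UParts c k t T)
    (hM : UParts c k (k - 1) M) (hTM : T ⊆ M)
    (j : ℕ) (hj : t ≤ j) (hjk : j ≤ k - 1) :
    (k - t - 1).choose (j - t) * ∏ i ∈ Finset.Ico j k, ((k - i) * c).choose c =
      (k - j).factorial * ∑ i ∈ Finset.Icc j (k - 1),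
        (i - t).choose (j - t) *
          {F | UPartition c k F ∧ T ⊆ F ∧ (M ∩ F).card = i}.ncard := by
  classical
  have hc1 : 1 ≤ c := by omega
  have hjk' : j ≤ k := by omega
  set 𝓕 : Finset (Finset (Finset (Fin (c * k)))) :=
    Finset.univ.filter (fun F => UPartition c k F ∧ T ⊆ F) with h𝓕
  set 𝓘 : Finset (Finset (Finset (Fin (c * k)))) :=
    M.powerset.filter (fun I => T ⊆ I ∧ I.card = j) with h𝓘
  have hMT : T.card = t := hT.1
  have hMcard : M.card = k - 1 := hM.1
  -- Step A : extension count
  have stepA : ∀ I ∈ 𝓘, (k - j).factorial *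
      (Finset.univ.filter (fun F => UPartition c k F ∧ I ⊆ F)).card
      = ∏ i ∈ Finset.Ico j k, ((k - i) * c).choose c := by
    intro I hI
    rw [h𝓘, Finset.mem_filter, Finset.mem_powerset] at hI
    obtain ⟨hIM, hTI, hIj⟩ := hI
    have hIU : UParts c k j I :=
      ⟨hIj, fun e he => hM.2.1 e (hIM he), fun e he f hf h => hM.2.2 e (hIM he) f (hIM hf) h⟩
    rw [ext_card c k hc1 I j hIU hjk']
    have hsupIcard : (I.sup id).card = j * c := by
      rw [card_biUnion_id hIU.2.2 hIU.2.1, hIj]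
    have hRcard : (Finset.univ \ I.sup id : Finset (Fin (c * k))).card = (k - j) * c := by
      rw [Finset.card_sdiff_of_subset (Finset.subset_univ _), hsupIcard, Finset.card_univ,
        Fintype.card_fin, Nat.sub_mul, mul_comm c k]
    rw [partsOf_card c hc1 (k - j) _ hRcard]
    rw [Finset.prod_Ico_eq_prod_range]
    apply Finset.prod_congr rfl
    intro i _
    have : k - j - i = k - (j + i) := Nat.sub_sub k j i
    rw [this]
  -- Step hExt : rewrite the filter
  have hExt : ∀ I ∈ 𝓘, Finset.univ.filter (fun F => UPartition c k F ∧ I ⊆ F)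
      = 𝓕.filter (fun F => I ⊆ F) := by
    intro I hI
    rw [h𝓘, Finset.mem_filter, Finset.mem_powerset] at hI
    obtain ⟨hIM, hTI, hIj⟩ := hI
    rw [h𝓕, Finset.filter_filter]
    apply Finset.filter_congr
    intro F _
    constructor
    · rintro ⟨h1, h2⟩; exact ⟨⟨h1, hTI.trans h2⟩, h2⟩
    · rintro ⟨⟨h1, _⟩, h2⟩; exact ⟨h1, h2⟩
  -- Step C : exchange of summation
  have stepC : ∑ I ∈ 𝓘, (𝓕.filter (fun F => I ⊆ F)).card
      = ∑ F ∈ 𝓕, (𝓘.filter (fun I => I ⊆ F)).card := by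
    simp only [Finset.card_filter]
    exact Finset.sum_comm
  -- Step D : per-F count
  have stepD : ∀ F ∈ 𝓕, (𝓘.filter (fun I => I ⊆ F)).card
      = ((M ∩ F).card - t).choose (j - t) := by
    intro F hF
    rw [h𝓕, Finset.mem_filter] at hF
    have hTMF : T ⊆ M ∩ F := Finset.subset_inter hTM hF.2.2
    have : 𝓘.filter (fun I => I ⊆ F)
        = (M ∩ F).powerset.filter (fun I => T ⊆ I ∧ I.card = j) := by
      ext I
      simp only [h𝓘, Finset.mem_filter, Finset.mem_powerset, Finset.subset_inter_iff]
      tauto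
    rw [this, count_between T (M ∩ F) t j hTMF hMT hj]
  -- Step E : group by (M ∩ F).card
  have hmaps : ∀ F ∈ 𝓕, (M ∩ F).card ∈ Finset.Icc t (k - 1) := by
    intro F hF
    rw [h𝓕, Finset.mem_filter] at hF
    have h1 : T ⊆ M ∩ F := Finset.subset_inter hTM hF.2.2
    have h2 := Finset.card_le_card h1
    have h3 := Finset.card_le_card (Finset.inter_subset_left (s₁ := M) (s₂ := F))
    rw [Finset.mem_Icc]
    omega
  have stepE : ∑ F ∈ 𝓕, ((M ∩ F).card - t).choose (j - t)
      = ∑ i ∈ Finset.Icc t (k - 1), (i - t).choose (j - t) *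
          (𝓕.filter (fun F => (M ∩ F).card = i)).card := by
    rw [← Finset.sum_fiberwise_of_maps_to hmaps (fun F => ((M ∩ F).card - t).choose (j - t))]
    apply Finset.sum_congr rfl
    intro i _
    have hconst : ∀ F ∈ 𝓕.filter (fun F => (M ∩ F).card = i),
        ((M ∩ F).card - t).choose (j - t) = (i - t).choose (j - t) := by
      intro F hF
      rw [Finset.mem_filter] at hF
      rw [hF.2]
    rw [Finset.sum_congr rfl hconst, Finset.sum_const, smul_eq_mul, mul_comm]
  -- Step F : restrict the sum
  have stepF : ∑ i ∈ Finset.Icc t (k - 1), (i - t).choose (j - t) *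
          (𝓕.filter (fun F => (M ∩ F).card = i)).card
      = ∑ i ∈ Finset.Icc j (k - 1), (i - t).choose (j - t) *
          (𝓕.filter (fun F => (M ∩ F).card = i)).card := by
    symm
    apply Finset.sum_subset
    · intro i hi
      rw [Finset.mem_Icc] at hi ⊢
      omega
    · intro i hi1 hi2
      rw [Finset.mem_Icc] at hi1
      rw [Finset.mem_Icc] at hi2
      have : i < j := by omega
      rw [Nat.choose_eq_zero_of_lt (by omega), Nat.zero_mul]
  -- Step G : ncard conversion
  have stepG : ∀ i, {F | UPartition c k F ∧ T ⊆ F ∧ (M ∩ F).card = i}.ncard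
      = (𝓕.filter (fun F => (M ∩ F).card = i)).card := by
    intro i
    rw [Set.ncard_eq_toFinset_card']
    congr 1
    ext F
    simp only [Set.mem_toFinset, Set.mem_setOf_eq, h𝓕, Finset.mem_filter, Finset.mem_univ,
      true_and]
    tauto
  -- 𝓘 card
  have h𝓘card : 𝓘.card = (k - t - 1).choose (j - t) := by
    rw [h𝓘, count_between T M t j hTM hMT hj, hMcard]
    congr 1
    omega
  calc (k - t - 1).choose (j - t) * ∏ i ∈ Finset.Ico j k, ((k - i) * c).choose c
      = ∑ I ∈ 𝓘, ∏ i ∈ Finset.Ico j k, ((k - i) * c).choose c := by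
        rw [Finset.sum_const, smul_eq_mul, h𝓘card]
    _ = ∑ I ∈ 𝓘, (k - j).factorial *
          (Finset.univ.filter (fun F => UPartition c k F ∧ I ⊆ F)).card := by
        exact (Finset.sum_congr rfl stepA).symm
    _ = (k - j).factorial * ∑ I ∈ 𝓘, (𝓕.filter (fun F => I ⊆ F)).card := by
        rw [Finset.mul_sum]
        exact Finset.sum_congr rfl (fun I hI => by rw [hExt I hI])
    _ = (k - j).factorial * ∑ F ∈ 𝓕, (𝓘.filter (fun I => I ⊆ F)).card := by rw [stepC]
    _ = (k - j).factorial * ∑ F ∈ 𝓕, ((M ∩ F).card - t).choose (j - t) := by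
        rw [Finset.sum_congr rfl stepD]
    _ = (k - j).factorial * ∑ i ∈ Finset.Icc j (k - 1), (i - t).choose (j - t) *
          (𝓕.filter (fun F => (M ∩ F).card = i)).card := by rw [stepE, stepF]
    _ = (k - j).factorial * ∑ i ∈ Finset.Icc j (k - 1),
          (i - t).choose (j - t) *
            {F | UPartition c k F ∧ T ⊆ F ∧ (M ∩ F).card = i}.ncard := by
        congr 1
        exact Finset.sum_congr rfl (fun i _ => by rw [stepG i])
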